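/- Let L be the subgroup of ℤ³ ⊕ ℤ³ (with standard basis x₁,x₂,x₃ for the first summand and y₁,y₂,y₃ for the second) consisting of all vectors (a,b) with a₁+a₂+a₃ ≡ b₁+b₂+b₃ (mod 4) and a₁+a₂+a₃ ≡ 0 (mod 2). Then the 6 vectors x₁−x₂, x₁−x₃, y₁−y₂, y₁−y₃, 2x₁+2y₁, 2x₁−2y₁ form a ℤ-basis of L. (This is the basis (7.1) of the character group T_H^* of a maximal torus of (SL₄×SL₄)/μ computed in Lemma 7.1 of the paper.) -/
import Mathlib


/-- The standard basis vector `x_i` of the first summand of `ℤ³ ⊕ ℤ³`. -/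
def xv (i : Fin 3) : (Fin 3 → ℤ) × (Fin 3 → ℤ) := (Pi.single i 1, 0)

/-- The standard basis vector `y_i` of the second summand of `ℤ³ ⊕ ℤ³`. -/
def yv (i : Fin 3) : (Fin 3 → ℤ) × (Fin 3 → ℤ) := (0, Pi.single i 1)

lemma mval4 {α : Type*} (v0 v1 v2 v3 v4 v5 : α) :
    ![v0, v1, v2, v3, v4, v5] (4 : Fin 6) = v4 := rfl

lemma mval5 {α : Type*} (v0 v1 v2 v3 v4 v5 : α) :
    ![v0, v1, v2, v3, v4, v5] (5 : Fin 6) = v5 := rfl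

/-- The basis (7.1) of the character lattice `T_H^*` of a maximal torus of `(SL₄×SL₄)/μ`
computed in Lemma 7.1. -/
theorem stmt_14 :
    LinearIndependent ℤ
      ![xv 0 - xv 1, xv 0 - xv 2, yv 0 - yv 1, yv 0 - yv 2,
        2 • xv 0 + 2 • yv 0, 2 • xv 0 - 2 • yv 0] ∧
    (Submodule.span ℤ (Set.range
      ![xv 0 - xv 1, xv 0 - xv 2, yv 0 - yv 1, yv 0 - yv 2,
        2 • xv 0 + 2 • yv 0, 2 • xv 0 - 2 • yv 0]) : Set ((Fin 3 → ℤ) × (Fin 3 → ℤ))) =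
      {v : (Fin 3 → ℤ) × (Fin 3 → ℤ) |
        (∑ i, v.1 i) ≡ (∑ i, v.2 i) [ZMOD 4] ∧ (∑ i, v.1 i) ≡ 0 [ZMOD 2]} := by
  constructor
  · rw [Fintype.linearIndependent_iff]
    intro g hg
    have h1 := congrArg Prod.fst hg
    have h2 := congrArg Prod.snd hg
    simp only [Fin.sum_univ_six, Matrix.cons_val_zero, Matrix.cons_val_one, Matrix.head_cons,
      Matrix.cons_val_two, Matrix.tail_cons, Matrix.cons_val_three, mval4, mval5] at h1 h2
    have e10 := congrFun h1 0
    have e11 := congrFun h1 1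
    have e12 := congrFun h1 2
    have e20 := congrFun h2 0
    have e21 := congrFun h2 1
    have e22 := congrFun h2 2
    simp [xv, yv, Pi.single_apply] at e10 e11 e12 e20 e21 e22
    intro i; fin_cases i <;> simp <;> omega
  · ext v
    simp only [SetLike.mem_coe, Set.mem_setOf_eq]
    constructor
    · intro hv
      induction hv using Submodule.span_induction with
      | mem w hw =>
        obtain ⟨i, rfl⟩ := hw
        fin_cases i <;>
          simp [Fin.sum_univ_three, xv, yv, Pi.single_apply] <;> decide
      | zero => simp
      | add a b _ _ ha hb =>
        simp only [Prod.fst_add, Prod.snd_add, Pi.add_apply, Finset.sum_add_distrib]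
        exact ⟨ha.1.add hb.1, by simpa using ha.2.add hb.2⟩
      | smul z a _ ha =>
        simp only [Prod.smul_fst, Prod.smul_snd, Pi.smul_apply, smul_eq_mul,
          ← Finset.mul_sum]
        exact ⟨ha.1.mul_left z, by simpa using ha.2.mul_left z⟩
    · intro ⟨h1, h2⟩
      set V := ![xv 0 - xv 1, xv 0 - xv 2, yv 0 - yv 1, yv 0 - yv 2,
        2 • xv 0 + 2 • yv 0, 2 • xv 0 - 2 • yv 0] with hV
      have hmem : ∀ i, V i ∈ Submodule.span ℤ (Set.range V) :=
        fun i => Submodule.subset_span ⟨i, rfl⟩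
      obtain ⟨k, hk⟩ : (4 : ℤ) ∣ (∑ i, v.1 i) + (∑ i, v.2 i) := by
        have d1 := h1.dvd
        have d2 := h2.dvd
        omega
      obtain ⟨l, hl⟩ : (4 : ℤ) ∣ (∑ i, v.1 i) - (∑ i, v.2 i) := by
        have d1 := h1.dvd
        omega
      have hv : v = (-v.1 1) • V 0 + (-v.1 2) • V 1 + (-v.2 1) • V 2 + (-v.2 2) • V 3
          + k • V 4 + l • V 5 := by
        have s1 : (∑ i, v.1 i) = v.1 0 + v.1 1 + v.1 2 := by
          rw [Fin.sum_univ_three]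
        have s2 : (∑ i, v.2 i) = v.2 0 + v.2 1 + v.2 2 := by
          rw [Fin.sum_univ_three]
        rw [s1, s2] at hk hl
        refine Prod.ext ?_ ?_ <;> funext j <;> fin_cases j <;>
          simp [hV, mval4, mval5, xv, yv, Pi.single_apply] <;> omega
      rw [hv]
      exact Submodule.add_mem _ (Submodule.add_mem _ (Submodule.add_mem _
        (Submodule.add_mem _ (Submodule.add_mem _
          (Submodule.smul_mem _ _ (hmem 0)) (Submodule.smul_mem _ _ (hmem 1)))
          (Submodule.smul_mem _ _ (hmem 2))) (Submodule.smul_mem _ _ (hmem 3)))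
          (Submodule.smul_mem _ _ (hmem 4))) (Submodule.smul_mem _ _ (hmem 5))
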